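/- For all x ∈ M and y ∈ N, the identity x ⊗ (sy) + Σ_{k=0}^{p−2} ((s − s_k)(dx)) ⊗ t^k y = s( x ⊗ t^{p−1} y ) holds in M ⊗_ℤ N. -/

import Mathlib

open TensorProduct Finset

/-- **Lemma (claim 2).**  Let `p ≥ 2`, let `M`, `N` be abelian groups with endomorphisms
`t_M`, `t_N` of order dividing `p`, and equip `M ⊗_ℤ N` with the diagonal action
`t = t_M ⊗ t_N`.  Writing `d = 1 − t`, `s = 1 + t + ⋯ + t^{p-1}` and
`s_q = 1 + t + ⋯ + t^q`, for all `x ∈ M` and `y ∈ N` one has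
`x ⊗ (sy) + Σ_{k=0}^{p−2} ((s − s_k)(dx)) ⊗ t^k y = s( x ⊗ t^{p−1} y )` in `M ⊗_ℤ N`. -/
theorem sum_smash_d_tensor
    (p : ℕ) (hp : 2 ≤ p)
    (M N : Type) [AddCommGroup M] [AddCommGroup N]
    (tM : Module.End ℤ M) (tN : Module.End ℤ N)
    (htM : tM ^ p = 1) (htN : tN ^ p = 1)
    (x : M) (y : N) :
    (x ⊗ₜ[ℤ] ((∑ j ∈ range p, tN ^ j) y)) +
      ∑ k ∈ range (p - 1),
        ((((∑ j ∈ range p, tM ^ j) - ∑ j ∈ range (k + 1), tM ^ j) ((1 - tM) x)) ⊗ₜ[ℤ]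
          ((tN ^ k) y))
      =
      (∑ j ∈ range p, (TensorProduct.map tM tN) ^ j)
        (x ⊗ₜ[ℤ] ((tN ^ (p - 1)) y)) := by
  obtain ⟨n, rfl⟩ : ∃ n, p = n + 1 := ⟨p - 1, by omega⟩
  have g : ∀ m : ℕ, (∑ j ∈ range m, tM ^ j) * (1 - tM) = 1 - tM ^ m := by
    intro m
    rw [← neg_sub tM 1, mul_neg, geom_sum_mul, neg_sub]
  have key : ∀ k : ℕ,
      (((∑ j ∈ range (n + 1), tM ^ j) - ∑ j ∈ range (k + 1), tM ^ j) ((1 - tM) x))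
        = (tM ^ (k + 1)) x - x := by
    intro k
    rw [← Module.End.mul_apply, sub_mul, g, g, htM]
    simp
  have mappow : ∀ j : ℕ,
      (TensorProduct.map tM tN) ^ j = TensorProduct.map (tM ^ j) (tN ^ j) := by
    intro j
    induction j with
    | zero => simp [TensorProduct.map_one]
    | succ j ih => rw [pow_succ, ih, pow_succ, pow_succ, ← TensorProduct.map_mul]
  simp only [key, sub_tmul, Finset.sum_sub_distrib, LinearMap.coe_sum,
    Finset.sum_apply, mappow, TensorProduct.map_tmul, ← Module.End.mul_apply (tN ^ _),
    ← pow_add]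
  rw [Finset.sum_range_succ' (fun j => (tM ^ j) x ⊗ₜ[ℤ] (tN ^ (j + (n + 1 - 1))) y) n]
  have hexp : ∀ i : ℕ, (tN ^ (i + 1 + n)) y = (tN ^ i) y := by
    intro i
    have : i + 1 + n = i + (n + 1) := by omega
    rw [this, pow_add, htN, mul_one]
  simp only [hexp, pow_zero, Module.End.one_apply, zero_add, Nat.add_sub_cancel, tmul_sum]
  rw [Finset.sum_range_succ (fun j => x ⊗ₜ[ℤ] (tN ^ j) y) n]
  abel
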